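/- Let G* be a bipartite graph with parts V_1, V_2 of sizes n_1, n_2, with edge weights, and let 0 \le k \le min(n_1, n_2). Form G^+ by adding a set V_1' of n_2 - k new vertices complete to V_2 and a set V_2' of n_1 - k new vertices complete to V_1, with all new edges of weight 1. Then the total weight of perfect matchings of G^+ equals (n_1 - k)! (n_2 - k)! times the total weight of matchings of size k in G*. -/
import Mathlib


open scoped Classical

/-- The edge-weight matrix of the augmented bipartite graph `G⁺`: the original bipartite
graph `G*` on parts `Fin n₁`, `Fin n₂` with edge weights `w`, together with a set
`V₁' = Fin (n₂ - k)` of new vertices complete to `V₂ = Fin n₂` and a set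
`V₂' = Fin (n₁ - k)` of new vertices complete to `V₁ = Fin n₁`, all new edges having
weight `1` (and no edges between `V₁'` and `V₂'`). -/
def augmentedWeight (n₁ n₂ k : ℕ) (w : Fin n₁ → Fin n₂ → ℚ) :
    (Fin n₁ ⊕ Fin (n₂ - k)) → (Fin n₂ ⊕ Fin (n₁ - k)) → ℚ
  | Sum.inl i, Sum.inl j => w i j
  | Sum.inl _, Sum.inr _ => 1
  | Sum.inr _, Sum.inl _ => 1
  | Sum.inr _, Sum.inr _ => 0

namespace PermAux

variable {n₁ n₂ k : ℕ}

/-- The set of pairs matched inside the original graph by a perfect matching of `G⁺`. -/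
noncomputable def Se (e : (Fin n₁ ⊕ Fin (n₂ - k)) ≃ (Fin n₂ ⊕ Fin (n₁ - k))) :
    Finset (Fin n₁ × Fin n₂) :=
  Finset.univ.filter (fun p => e (Sum.inl p.1) = Sum.inl p.2)

lemma mem_Se {e : (Fin n₁ ⊕ Fin (n₂ - k)) ≃ (Fin n₂ ⊕ Fin (n₁ - k))}
    {p : Fin n₁ × Fin n₂} : p ∈ Se e ↔ e (Sum.inl p.1) = Sum.inl p.2 := by
  simp [Se]

/-- A perfect matching of `G⁺` is "good" if no new vertex is matched to a new vertex. -/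
def Good (e : (Fin n₁ ⊕ Fin (n₂ - k)) ≃ (Fin n₂ ⊕ Fin (n₁ - k))) : Prop :=
  ∀ x, (e (Sum.inr x)).isLeft

lemma weight_eq_zero_of_not_good
    (w : Fin n₁ → Fin n₂ → ℚ) {e : (Fin n₁ ⊕ Fin (n₂ - k)) ≃ (Fin n₂ ⊕ Fin (n₁ - k))}
    (he : ¬ Good e) : (∏ a, augmentedWeight n₁ n₂ k w a (e a)) = 0 := by
  rw [Good] at he
  push_neg at he
  obtain ⟨x, hx⟩ := he
  obtain ⟨y, hy⟩ := Sum.isRight_iff.mp (by simpa using hx)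
  refine Finset.prod_eq_zero (Finset.mem_univ (Sum.inr x)) ?_
  rw [hy]; rfl

lemma Se_matching {e : (Fin n₁ ⊕ Fin (n₂ - k)) ≃ (Fin n₂ ⊕ Fin (n₁ - k))} :
    ∀ p ∈ Se e, ∀ q ∈ Se e, p ≠ q → p.1 ≠ q.1 ∧ p.2 ≠ q.2 := by
  intro p hp q hq hpq
  rw [mem_Se] at hp hq
  constructor
  · intro h
    apply hpq
    have : (Sum.inl p.2 : Fin n₂ ⊕ Fin (n₁ - k)) = Sum.inl q.2 := by rw [← hp, ← hq, h]
    exact Prod.ext h (by simpa using this)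
  · intro h
    apply hpq
    have : e (Sum.inl p.1) = e (Sum.inl q.1) := by rw [hp, hq, h]
    have h1 : p.1 = q.1 := by simpa using e.injective this
    exact Prod.ext h1 h

lemma card_Se_eq_card_A {e : (Fin n₁ ⊕ Fin (n₂ - k)) ≃ (Fin n₂ ⊕ Fin (n₁ - k))} :
    (Se e).card =
      (Finset.univ.filter (fun i : Fin n₁ => (e (Sum.inl i)).isLeft)).card := by
  apply Finset.card_bij (fun (p : Fin n₁ × Fin n₂) _ => p.1)
  · intro p hp
    rw [mem_Se] at hp
    simp [hp]
  · intro p hp q hq h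
    rw [mem_Se] at hp hq
    have : (Sum.inl p.2 : Fin n₂ ⊕ Fin (n₁ - k)) = Sum.inl q.2 := by rw [← hp, ← hq, h]
    exact Prod.ext h (by simpa using this)
  · intro i hi
    simp only [Finset.mem_filter, Finset.mem_univ, true_and] at hi
    exact ⟨(i, (e (Sum.inl i)).getLeft hi), mem_Se.mpr (Sum.inl_getLeft _ hi).symm, rfl⟩

lemma Se_card (hk₂ : k ≤ n₂) {e : (Fin n₁ ⊕ Fin (n₂ - k)) ≃ (Fin n₂ ⊕ Fin (n₁ - k))}
    (he : Good e) : (Se e).card = k := by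
  rw [card_Se_eq_card_A]
  have himg : (Finset.univ.image (fun j : Fin n₂ => e.symm (Sum.inl j))) =
      Finset.univ.filter (fun a : Fin n₁ ⊕ Fin (n₂ - k) => (e a).isLeft) := by
    ext a
    simp only [Finset.mem_image, Finset.mem_univ, true_and, Finset.mem_filter]
    constructor
    · rintro ⟨j, rfl⟩; simp
    · intro h
      refine ⟨(e a).getLeft h, e.injective ?_⟩
      rw [Equiv.apply_symm_apply, Sum.inl_getLeft]
  have hcard1 : (Finset.univ.image (fun j : Fin n₂ => e.symm (Sum.inl j))).card = n₂ := by
    rw [Finset.card_image_of_injective _ (fun a b hab => by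
      simpa using e.symm.injective hab)]
    simp
  have hsplit : (Finset.univ.filter
      (fun a : Fin n₁ ⊕ Fin (n₂ - k) => (e a).isLeft)).card =
      (Finset.univ.filter (fun i : Fin n₁ => (e (Sum.inl i)).isLeft)).card +
      (Finset.univ.filter (fun x : Fin (n₂ - k) => (e (Sum.inr x)).isLeft)).card := by
    set F := Finset.univ.filter (fun a : Fin n₁ ⊕ Fin (n₂ - k) => (e a).isLeft) with hF
    have hL : F.toLeft = Finset.univ.filter (fun i : Fin n₁ => (e (Sum.inl i)).isLeft) := by
      ext i; simp [hF]
    have hR : F.toRight = Finset.univ.filter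
        (fun x : Fin (n₂ - k) => (e (Sum.inr x)).isLeft) := by
      ext x; simp [hF]
    rw [← Finset.card_toLeft_add_card_toRight, hL, hR]
  have hgood : (Finset.univ.filter
      (fun x : Fin (n₂ - k) => (e (Sum.inr x)).isLeft)).card = n₂ - k := by
    rw [Finset.filter_true_of_mem (fun x _ => he x)]
    simp
  rw [himg, hsplit, hgood] at hcard1
  omega

lemma weight_eq_of_good
    (w : Fin n₁ → Fin n₂ → ℚ) {e : (Fin n₁ ⊕ Fin (n₂ - k)) ≃ (Fin n₂ ⊕ Fin (n₁ - k))}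
    (he : Good e) :
    (∏ a, augmentedWeight n₁ n₂ k w a (e a)) = ∏ p ∈ Se e, w p.1 p.2 := by
  rw [Fintype.prod_sum_type]
  have h2 : (∏ x, augmentedWeight n₁ n₂ k w (Sum.inr x) (e (Sum.inr x))) = 1 := by
    refine Finset.prod_eq_one fun x _ => ?_
    rw [← Sum.inl_getLeft _ (he x)]
    rfl
  have h1 : (∏ i, augmentedWeight n₁ n₂ k w (Sum.inl i) (e (Sum.inl i))) =
      ∏ p ∈ Se e, w p.1 p.2 := by
    rw [← Finset.prod_filter_mul_prod_filter_not Finset.univ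
      (fun i : Fin n₁ => (e (Sum.inl i)).isLeft)]
    have hb : (∏ i ∈ Finset.univ.filter
        (fun i : Fin n₁ => ¬ (e (Sum.inl i)).isLeft),
        augmentedWeight n₁ n₂ k w (Sum.inl i) (e (Sum.inl i))) = 1 := by
      refine Finset.prod_eq_one fun i hi => ?_
      simp only [Finset.mem_filter, Finset.mem_univ, true_and] at hi
      rw [← Sum.inr_getRight _ (Sum.not_isLeft.mp hi)]
      rfl
    have ha : (∏ p ∈ Se e, w p.1 p.2) = ∏ i ∈ Finset.univ.filter
        (fun i : Fin n₁ => (e (Sum.inl i)).isLeft),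
        augmentedWeight n₁ n₂ k w (Sum.inl i) (e (Sum.inl i)) := by
      apply Finset.prod_bij (fun (p : Fin n₁ × Fin n₂) _ => p.1)
      · intro p hp
        rw [mem_Se] at hp
        simp [hp]
      · intro p hp q hq h
        rw [mem_Se] at hp hq
        have : (Sum.inl p.2 : Fin n₂ ⊕ Fin (n₁ - k)) = Sum.inl q.2 := by
          rw [← hp, ← hq, h]
        exact Prod.ext h (by simpa using this)
      · intro i hi
        simp only [Finset.mem_filter, Finset.mem_univ, true_and] at hi
        exact ⟨(i, (e (Sum.inl i)).getLeft hi), mem_Se.mpr (Sum.inl_getLeft _ hi).symm,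
          rfl⟩
      · intro p hp
        rw [mem_Se] at hp
        rw [hp]
        rfl
    rw [ha, hb, mul_one]
  rw [h1, h2, mul_one]

section Fiber

variable (S : Finset (Fin n₁ × Fin n₂))

lemma mem_fst_iff {i : Fin n₁} : i ∈ S.image Prod.fst ↔ ∃ j, (i, j) ∈ S := by
  constructor
  · intro h
    obtain ⟨p, hp, rfl⟩ := Finset.mem_image.mp h
    exact ⟨p.2, by simpa using hp⟩
  · rintro ⟨j, hj⟩
    exact Finset.mem_image.mpr ⟨(i, j), hj, rfl⟩

lemma mem_snd_iff {j : Fin n₂} : j ∈ S.image Prod.snd ↔ ∃ i, (i, j) ∈ S := by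
  constructor
  · intro h
    obtain ⟨p, hp, rfl⟩ := Finset.mem_image.mp h
    exact ⟨p.1, by simpa using hp⟩
  · rintro ⟨i, hi⟩
    exact Finset.mem_image.mpr ⟨(i, j), hi, rfl⟩

lemma matching_unique (hM : ∀ p ∈ S, ∀ q ∈ S, p ≠ q → p.1 ≠ q.1 ∧ p.2 ≠ q.2)
    {i : Fin n₁} {j j' : Fin n₂} (h1 : (i, j) ∈ S) (h2 : (i, j') ∈ S) : j = j' := by
  by_contra hne
  exact (hM _ h1 _ h2 (fun hEq => hne (congrArg Prod.snd hEq))).1 rfl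

lemma matching_unique' (hM : ∀ p ∈ S, ∀ q ∈ S, p ≠ q → p.1 ≠ q.1 ∧ p.2 ≠ q.2)
    {i i' : Fin n₁} {j : Fin n₂} (h1 : (i, j) ∈ S) (h2 : (i', j) ∈ S) : i = i' := by
  by_contra hne
  exact (hM _ h1 _ h2 (fun hEq => hne (congrArg Prod.fst hEq))).2 rfl

/-- Assemble a perfect matching of `G⁺` from a `k`-matching of `G*` together with
bijections on the leftover vertices. -/
noncomputable def asmFun
    (g : {i : Fin n₁ // i ∉ S.image Prod.fst} → Fin (n₁ - k))
    (h : Fin (n₂ - k) → {j : Fin n₂ // j ∉ S.image Prod.snd}) :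
    (Fin n₁ ⊕ Fin (n₂ - k)) → (Fin n₂ ⊕ Fin (n₁ - k)) :=
  Sum.elim
    (fun i => if hex : ∃ j, (i, j) ∈ S then Sum.inl hex.choose
      else Sum.inr (g ⟨i, fun hm => hex ((mem_fst_iff S).mp hm)⟩))
    (fun x => Sum.inl (h x).1)

lemma asmFun_injective (hM : ∀ p ∈ S, ∀ q ∈ S, p ≠ q → p.1 ≠ q.1 ∧ p.2 ≠ q.2)
    {g : {i : Fin n₁ // i ∉ S.image Prod.fst} → Fin (n₁ - k)}
    {h : Fin (n₂ - k) → {j : Fin n₂ // j ∉ S.image Prod.snd}}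
    (hg : Function.Injective g) (hh : Function.Injective h) :
    Function.Injective (asmFun S g h) := by
  intro a b hab
  rcases a with i | x <;> rcases b with i' | x' <;>
    simp only [asmFun, Sum.elim_inl, Sum.elim_inr] at hab
  · by_cases h1 : ∃ j, (i, j) ∈ S <;> by_cases h2 : ∃ j, (i', j) ∈ S
    · rw [dif_pos h1, dif_pos h2] at hab
      have hc : h1.choose = h2.choose := by simpa using hab
      have h1s := h1.choose_spec
      have h2s := h2.choose_spec
      rw [hc] at h1s
      rw [matching_unique' S hM h1s h2s]
    · rw [dif_pos h1, dif_neg h2] at hab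
      simp at hab
    · rw [dif_neg h1, dif_pos h2] at hab
      simp at hab
    · rw [dif_neg h1, dif_neg h2] at hab
      have := hg (by simpa using hab)
      rw [show i = i' from congrArg Subtype.val this]
  · exfalso
    by_cases h1 : ∃ j, (i, j) ∈ S
    · rw [dif_pos h1] at hab
      have hc : h1.choose = (h x').1 := by simpa using hab
      refine (h x').2 ((mem_snd_iff S).mpr ⟨i, ?_⟩)
      rw [← hc]; exact h1.choose_spec
    · rw [dif_neg h1] at hab
      simp at hab
  · exfalso
    by_cases h1 : ∃ j, (i', j) ∈ S
    · rw [dif_pos h1] at hab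
      have hc : (h x).1 = h1.choose := by simpa using hab
      refine (h x).2 ((mem_snd_iff S).mpr ⟨i', ?_⟩)
      rw [hc]; exact h1.choose_spec
    · rw [dif_neg h1] at hab
      simp at hab
  · have : h x = h x' := Subtype.ext (by simpa using hab)
    rw [hh this]

lemma card_compl_fst (hcard : S.card = k)
    (hM : ∀ p ∈ S, ∀ q ∈ S, p ≠ q → p.1 ≠ q.1 ∧ p.2 ≠ q.2) :
    Fintype.card {i : Fin n₁ // i ∉ S.image Prod.fst} = n₁ - k := by
  have hA : (S.image Prod.fst).card = k := by
    rw [Finset.card_image_of_injOn, hcard]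
    intro p hp q hq hpq
    by_contra hne
    exact (hM p hp q hq hne).1 hpq
  rw [Fintype.card_subtype_compl, Fintype.card_fin]
  congr 1
  simpa [hA] using Fintype.card_coe (S.image Prod.fst)

lemma card_compl_snd (hcard : S.card = k)
    (hM : ∀ p ∈ S, ∀ q ∈ S, p ≠ q → p.1 ≠ q.1 ∧ p.2 ≠ q.2) :
    Fintype.card {j : Fin n₂ // j ∉ S.image Prod.snd} = n₂ - k := by
  have hB : (S.image Prod.snd).card = k := by
    rw [Finset.card_image_of_injOn, hcard]
    intro p hp q hq hpq
    by_contra hne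
    exact (hM p hp q hq hne).2 hpq
  rw [Fintype.card_subtype_compl, Fintype.card_fin]
  congr 1
  simpa [hB] using Fintype.card_coe (S.image Prod.snd)

noncomputable def asmEquiv (hk₁ : k ≤ n₁) (hk₂ : k ≤ n₂)
    (hM : ∀ p ∈ S, ∀ q ∈ S, p ≠ q → p.1 ≠ q.1 ∧ p.2 ≠ q.2)
    (g : {i : Fin n₁ // i ∉ S.image Prod.fst} ≃ Fin (n₁ - k))
    (h : Fin (n₂ - k) ≃ {j : Fin n₂ // j ∉ S.image Prod.snd}) :
    (Fin n₁ ⊕ Fin (n₂ - k)) ≃ (Fin n₂ ⊕ Fin (n₁ - k)) :=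
  Equiv.ofBijective (asmFun S g h)
    ((Fintype.bijective_iff_injective_and_card _).mpr
      ⟨asmFun_injective S hM g.injective h.injective, by simp; omega⟩)

lemma asmEquiv_good (hk₁ : k ≤ n₁) (hk₂ : k ≤ n₂)
    (hM : ∀ p ∈ S, ∀ q ∈ S, p ≠ q → p.1 ≠ q.1 ∧ p.2 ≠ q.2)
    (g : {i : Fin n₁ // i ∉ S.image Prod.fst} ≃ Fin (n₁ - k))
    (h : Fin (n₂ - k) ≃ {j : Fin n₂ // j ∉ S.image Prod.snd}) :
    Good (asmEquiv S hk₁ hk₂ hM g h) := fun _ => rfl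

lemma asmEquiv_apply (hk₁ : k ≤ n₁) (hk₂ : k ≤ n₂)
    (hM : ∀ p ∈ S, ∀ q ∈ S, p ≠ q → p.1 ≠ q.1 ∧ p.2 ≠ q.2)
    (g : {i : Fin n₁ // i ∉ S.image Prod.fst} ≃ Fin (n₁ - k))
    (h : Fin (n₂ - k) ≃ {j : Fin n₂ // j ∉ S.image Prod.snd})
    (a : Fin n₁ ⊕ Fin (n₂ - k)) :
    asmEquiv S hk₁ hk₂ hM g h a = asmFun S g h a := rfl

lemma Se_asmEquiv (hk₁ : k ≤ n₁) (hk₂ : k ≤ n₂)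
    (hM : ∀ p ∈ S, ∀ q ∈ S, p ≠ q → p.1 ≠ q.1 ∧ p.2 ≠ q.2)
    (g : {i : Fin n₁ // i ∉ S.image Prod.fst} ≃ Fin (n₁ - k))
    (h : Fin (n₂ - k) ≃ {j : Fin n₂ // j ∉ S.image Prod.snd}) :
    Se (asmEquiv S hk₁ hk₂ hM g h) = S := by
  ext p
  rw [mem_Se]
  show asmFun S g h (Sum.inl p.1) = Sum.inl p.2 ↔ _
  simp only [asmFun, Sum.elim_inl]
  split_ifs with hex
  · constructor
    · intro hEq
      have hc : hex.choose = p.2 := by simpa using hEq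
      have := hex.choose_spec
      rw [hc] at this
      simpa using this
    · intro hp
      rw [matching_unique S hM hex.choose_spec (show (p.1, p.2) ∈ S by simpa using hp)]
  · constructor
    · intro hEq; simp at hEq
    · intro hp; exact absurd ⟨p.2, by simpa using hp⟩ hex

/-- Restriction of a good matching to the leftover left vertices. -/
noncomputable def resG (e : (Fin n₁ ⊕ Fin (n₂ - k)) ≃ (Fin n₂ ⊕ Fin (n₁ - k)))
    (hSe : Se e = S) : {i : Fin n₁ // i ∉ S.image Prod.fst} → Fin (n₁ - k) :=
  fun i => (e (Sum.inl i.1)).getRight (by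
    rw [← Sum.not_isLeft]
    intro hL
    refine i.2 ((mem_fst_iff S).mpr ⟨(e (Sum.inl i.1)).getLeft hL, ?_⟩)
    have hmem : (i.1, (e (Sum.inl i.1)).getLeft hL) ∈ Se e :=
      mem_Se.mpr (Sum.inl_getLeft _ hL).symm
    rwa [hSe] at hmem)

/-- Restriction of a good matching to the new left vertices. -/
noncomputable def resH (e : (Fin n₁ ⊕ Fin (n₂ - k)) ≃ (Fin n₂ ⊕ Fin (n₁ - k)))
    (he : Good e) (hSe : Se e = S) :
    Fin (n₂ - k) → {j : Fin n₂ // j ∉ S.image Prod.snd} :=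
  fun x => ⟨(e (Sum.inr x)).getLeft (he x), by
    intro hm
    obtain ⟨i, hi⟩ := (mem_snd_iff S).mp hm
    rw [← hSe, mem_Se] at hi
    have : e (Sum.inl i) = e (Sum.inr x) := by rw [hi, Sum.inl_getLeft]
    simpa using e.injective this⟩

lemma resG_injective (e : (Fin n₁ ⊕ Fin (n₂ - k)) ≃ (Fin n₂ ⊕ Fin (n₁ - k)))
    (hSe : Se e = S) : Function.Injective (resG S e hSe) := by
  intro a b hab
  simp only [resG] at hab
  have h2 := congrArg (Sum.inr : Fin (n₁ - k) → Fin n₂ ⊕ Fin (n₁ - k)) hab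
  rw [Sum.inr_getRight, Sum.inr_getRight] at h2
  exact Subtype.ext (by simpa using e.injective h2)

lemma resH_injective (e : (Fin n₁ ⊕ Fin (n₂ - k)) ≃ (Fin n₂ ⊕ Fin (n₁ - k)))
    (he : Good e) (hSe : Se e = S) : Function.Injective (resH S e he hSe) := by
  intro a b hab
  have hv := congrArg Subtype.val hab
  simp only [resH] at hv
  have h2 := congrArg (Sum.inl : Fin n₂ → Fin n₂ ⊕ Fin (n₁ - k)) hv
  rw [Sum.inl_getLeft, Sum.inl_getLeft] at h2
  simpa using e.injective h2

noncomputable def fiberEquiv (hk₁ : k ≤ n₁) (hk₂ : k ≤ n₂) (hcard : S.card = k)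
    (hM : ∀ p ∈ S, ∀ q ∈ S, p ≠ q → p.1 ≠ q.1 ∧ p.2 ≠ q.2) :
    {e : (Fin n₁ ⊕ Fin (n₂ - k)) ≃ (Fin n₂ ⊕ Fin (n₁ - k)) // Good e ∧ Se e = S} ≃
      ({i : Fin n₁ // i ∉ S.image Prod.fst} ≃ Fin (n₁ - k)) ×
      (Fin (n₂ - k) ≃ {j : Fin n₂ // j ∉ S.image Prod.snd}) where
  toFun e :=
    (Equiv.ofBijective (resG S e.1 e.2.2)
      ((Fintype.bijective_iff_injective_and_card _).mpr
        ⟨resG_injective S e.1 e.2.2, by rw [card_compl_fst S hcard hM]; simp⟩),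
     Equiv.ofBijective (resH S e.1 e.2.1 e.2.2)
      ((Fintype.bijective_iff_injective_and_card _).mpr
        ⟨resH_injective S e.1 e.2.1 e.2.2, by rw [card_compl_snd S hcard hM]; simp⟩))
  invFun gh := ⟨asmEquiv S hk₁ hk₂ hM gh.1 gh.2,
    asmEquiv_good S hk₁ hk₂ hM gh.1 gh.2, Se_asmEquiv S hk₁ hk₂ hM gh.1 gh.2⟩
  left_inv := by
    rintro ⟨e, he, hSe⟩
    apply Subtype.ext
    apply Equiv.ext
    rintro (i | x)
    · rw [asmEquiv_apply]
      simp only [asmFun, Sum.elim_inl]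
      split_ifs with hex
      · have hspec := hex.choose_spec
        have : (i, hex.choose) ∈ Se e := by rw [hSe]; exact hspec
        exact (mem_Se.mp this).symm
      · exact Sum.inr_getRight _ _
    · rw [asmEquiv_apply]
      exact Sum.inl_getLeft _ _
  right_inv := by
    rintro ⟨g, h⟩
    refine Prod.ext ?_ ?_
    · apply Equiv.ext
      rintro ⟨i, hi⟩
      have hex : ¬ ∃ j, (i, j) ∈ S := fun h' => hi ((mem_fst_iff S).mpr h')
      apply Sum.inr_injective
      have h1 : (Sum.inr (resG S (asmEquiv S hk₁ hk₂ hM g h)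
            (Se_asmEquiv S hk₁ hk₂ hM g h) ⟨i, hi⟩) : Fin n₂ ⊕ Fin (n₁ - k)) =
          asmEquiv S hk₁ hk₂ hM g h (Sum.inl i) := Sum.inr_getRight _ _
      rw [show (Sum.inr ((Equiv.ofBijective (resG S (asmEquiv S hk₁ hk₂ hM g h)
            (Se_asmEquiv S hk₁ hk₂ hM g h)) _) ⟨i, hi⟩) : Fin n₂ ⊕ Fin (n₁ - k)) =
          asmEquiv S hk₁ hk₂ hM g h (Sum.inl i) from h1]
      rw [asmEquiv_apply]
      simp only [asmFun, Sum.elim_inl]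
      rw [dif_neg hex]
    · apply Equiv.ext
      intro x
      apply Subtype.ext
      apply Sum.inl_injective
      have h1 : (Sum.inl ((resH S (asmEquiv S hk₁ hk₂ hM g h)
            (asmEquiv_good S hk₁ hk₂ hM g h) (Se_asmEquiv S hk₁ hk₂ hM g h) x).1) :
            Fin n₂ ⊕ Fin (n₁ - k)) =
          asmEquiv S hk₁ hk₂ hM g h (Sum.inr x) :=
        Sum.inl_getLeft (asmEquiv S hk₁ hk₂ hM g h (Sum.inr x))
          (asmEquiv_good S hk₁ hk₂ hM g h x)
      rw [show (Sum.inl (((Equiv.ofBijective (resH S (asmEquiv S hk₁ hk₂ hM g h)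
            (asmEquiv_good S hk₁ hk₂ hM g h) (Se_asmEquiv S hk₁ hk₂ hM g h)) _) x).1) :
            Fin n₂ ⊕ Fin (n₁ - k)) =
          asmEquiv S hk₁ hk₂ hM g h (Sum.inr x) from h1]
      rw [asmEquiv_apply]
      rfl

end Fiber

lemma fiber_card (hk₁ : k ≤ n₁) (hk₂ : k ≤ n₂) (S : Finset (Fin n₁ × Fin n₂))
    (hcard : S.card = k) (hM : ∀ p ∈ S, ∀ q ∈ S, p ≠ q → p.1 ≠ q.1 ∧ p.2 ≠ q.2) :
    ((Finset.univ.filter (fun e : (Fin n₁ ⊕ Fin (n₂ - k)) ≃ (Fin n₂ ⊕ Fin (n₁ - k)) =>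
        Good e ∧ Se e = S)).card) = (n₁ - k).factorial * (n₂ - k).factorial := by
  have h1 : ((Finset.univ.filter
      (fun e : (Fin n₁ ⊕ Fin (n₂ - k)) ≃ (Fin n₂ ⊕ Fin (n₁ - k)) =>
        Good e ∧ Se e = S)).card) =
      Fintype.card {e : (Fin n₁ ⊕ Fin (n₂ - k)) ≃ (Fin n₂ ⊕ Fin (n₁ - k)) //
        Good e ∧ Se e = S} := (Fintype.card_subtype _).symm
  rw [h1, Fintype.card_congr (fiberEquiv S hk₁ hk₂ hcard hM), Fintype.card_prod]
  have hEq1 : Fintype.card {i : Fin n₁ // i ∉ S.image Prod.fst} =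
      Fintype.card (Fin (n₁ - k)) := by rw [card_compl_fst S hcard hM]; simp
  have hEq2 : Fintype.card (Fin (n₂ - k)) =
      Fintype.card {j : Fin n₂ // j ∉ S.image Prod.snd} := by
    rw [card_compl_snd S hcard hM]; simp
  rw [Fintype.card_equiv (Fintype.equivOfCardEq hEq1),
    Fintype.card_equiv (Fintype.equivOfCardEq hEq2),
    card_compl_fst S hcard hM, Fintype.card_fin]

end PermAux

theorem permanent_eq_factorial_mul_kMatchings
    (n₁ n₂ k : ℕ) (hk₁ : k ≤ n₁) (hk₂ : k ≤ n₂)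
    (w : Fin n₁ → Fin n₂ → ℚ) (hw : ∀ i j, 0 ≤ w i j) :
    (∑ e : (Fin n₁ ⊕ Fin (n₂ - k)) ≃ (Fin n₂ ⊕ Fin (n₁ - k)),
        ∏ a, augmentedWeight n₁ n₂ k w a (e a)) =
      ((n₁ - k).factorial : ℚ) * ((n₂ - k).factorial : ℚ) *
        ∑ S ∈ Finset.univ.filter
            (fun S : Finset (Fin n₁ × Fin n₂) =>
              S.card = k ∧ ∀ p ∈ S, ∀ q ∈ S, p ≠ q → p.1 ≠ q.1 ∧ p.2 ≠ q.2),
          ∏ p ∈ S, w p.1 p.2 := by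
  classical
  open PermAux in
  calc (∑ e : (Fin n₁ ⊕ Fin (n₂ - k)) ≃ (Fin n₂ ⊕ Fin (n₁ - k)),
        ∏ a, augmentedWeight n₁ n₂ k w a (e a))
      = ∑ e ∈ Finset.univ.filter (fun e => Good e),
          ∏ a, augmentedWeight n₁ n₂ k w a (e a) := by
        rw [Finset.sum_filter_of_ne]
        intro e _ h
        by_contra hg
        exact h (weight_eq_zero_of_not_good w hg)
    _ = ∑ S ∈ Finset.univ.filter
            (fun S : Finset (Fin n₁ × Fin n₂) =>
              S.card = k ∧ ∀ p ∈ S, ∀ q ∈ S, p ≠ q → p.1 ≠ q.1 ∧ p.2 ≠ q.2),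
          ∑ e ∈ (Finset.univ.filter (fun e => Good e)).filter (fun e => Se e = S),
            ∏ a, augmentedWeight n₁ n₂ k w a (e a) := by
        rw [Finset.sum_fiberwise_of_maps_to]
        intro e he
        simp only [Finset.mem_filter, Finset.mem_univ, true_and] at he ⊢
        exact ⟨Se_card hk₂ he, Se_matching⟩
    _ = ∑ S ∈ Finset.univ.filter
            (fun S : Finset (Fin n₁ × Fin n₂) =>
              S.card = k ∧ ∀ p ∈ S, ∀ q ∈ S, p ≠ q → p.1 ≠ q.1 ∧ p.2 ≠ q.2),
          (((n₁ - k).factorial * (n₂ - k).factorial : ℕ) : ℚ) * ∏ p ∈ S, w p.1 p.2 := by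
        refine Finset.sum_congr rfl ?_
        intro S hS
        simp only [Finset.mem_filter, Finset.mem_univ, true_and] at hS
        rw [Finset.filter_filter]
        have : ∀ e ∈ Finset.univ.filter
            (fun e : (Fin n₁ ⊕ Fin (n₂ - k)) ≃ (Fin n₂ ⊕ Fin (n₁ - k)) =>
              Good e ∧ Se e = S),
            (∏ a, augmentedWeight n₁ n₂ k w a (e a)) = ∏ p ∈ S, w p.1 p.2 := by
          intro e he
          simp only [Finset.mem_filter, Finset.mem_univ, true_and] at he
          rw [weight_eq_of_good w he.1, he.2]
        rw [Finset.sum_congr rfl this, Finset.sum_const, nsmul_eq_mul,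
          fiber_card hk₁ hk₂ S hS.1 hS.2]
    _ = ((n₁ - k).factorial : ℚ) * ((n₂ - k).factorial : ℚ) *
        ∑ S ∈ Finset.univ.filter
            (fun S : Finset (Fin n₁ × Fin n₂) =>
              S.card = k ∧ ∀ p ∈ S, ∀ q ∈ S, p ≠ q → p.1 ≠ q.1 ∧ p.2 ≠ q.2),
          ∏ p ∈ S, w p.1 p.2 := by
        rw [Finset.mul_sum]
        refine Finset.sum_congr rfl ?_
        intro S _
        push_cast
        ring
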